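/- In the AOE decryption equation with ⟨X,S⟩ = σ ≠ 0, the decryption product equals e(g,g)^{ω·(z₁λ₁+z₂λ₂)·σ}; consequently, if z₁, z₂ are fixed nonzero and λ₁, λ₂ are chosen independently uniformly at random from Z_p, the result is uniformly distributed in the cyclic group generated by e(g,g)^{ω·σ}, and in particular equals 1_{G_T} with probability 1/p when ω ≠ 0 and σ ≠ 0 and z₁λ₁ + z₂λ₂ is uniform in Z_p. -/

import Mathlib

open Finset

/-- for a non-matching ciphertext with `⟨X,S⟩ = σ ≠ 0`, the AOE
decryption product equals `e(g,g)^{ω·(z₁λ₁+z₂λ₂)·σ}`; and if moreover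
`ω ≠ 0`, `z₁, z₂ ≠ 0`, then over uniform independent `λ₁, λ₂` the product
equals `1` with probability exactly `1/p`. -/
theorem aoe_pdec_nonmatching (p u : ℕ) [Fact p.Prime]
    (G GT : Type*) [CommGroup G] [CommGroup GT] [DecidableEq GT]
    (gp : ZMod p → G) (gtp : ZMod p → GT) (e : G → G → GT)
    (hgp : ∀ a b : ZMod p, gp (a + b) = gp a * gp b)
    (hgtp : ∀ a b : ZMod p, gtp (a + b) = gtp a * gtp b)
    (he : ∀ a b : ZMod p, e (gp a) (gp b) = gtp (a * b))
    (αv βv z : Fin 2 → ZMod p)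
    (θv ωv γv δv r : Fin (u + 1) → Fin 2 → ZMod p)
    (x s : Fin (u + 1) → ZMod p) (ω e2 l₀ q₀ σ : ZMod p)
    (hconstr : ∀ i b, αv b * θv i b - βv b * ωv i b = ω)
    (hσ : ∑ i, x i * s i = σ) (hσ0 : σ ≠ 0) :
    (let DecProd : (Fin 2 → ZMod p) → GT := fun lam =>
        gtp (-(e2 * q₀)) *
        e (gp q₀)
          (gp (e2 + ∑ i, ∑ b,
            (-(γv i b) * (-(βv b * r i b) + lam b * θv i b * s i) +
             -(δv i b) * (αv b * r i b - lam b * ωv i b * s i)))) *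
        e (gp (ω * l₀)) (gp (-(∑ i, ∑ b, r i b))) *
        ∏ i, ∏ b,
          (e (gp (l₀ * ωv i b + q₀ * γv i b + z b * αv b * x i))
             (gp (-(βv b * r i b) + lam b * θv i b * s i)) *
           e (gp (l₀ * θv i b + q₀ * δv i b + z b * βv b * x i))
             (gp (αv b * r i b - lam b * ωv i b * s i)))
     (∀ lam : Fin 2 → ZMod p,
        DecProd lam = gtp (ω * (z 0 * lam 0 + z 1 * lam 1) * σ)) ∧
     (ω ≠ 0 → z 0 ≠ 0 → z 1 ≠ 0 → Function.Injective gtp →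
        ((univ : Finset (Fin 2 → ZMod p)).filter
            (fun lam => DecProd lam = 1)).card * p
          = (univ : Finset (Fin 2 → ZMod p)).card)) := by
  have h0 : gtp 0 = 1 := by
    have h := (hgtp 0 0).symm
    rw [add_zero] at h
    exact (mul_eq_left.mp h)
  have hsum : ∀ {ι : Type} [DecidableEq ι] (t : Finset ι) (f : ι → ZMod p),
      gtp (∑ i ∈ t, f i) = ∏ i ∈ t, gtp (f i) := by
    intro ι _ t f
    induction t using Finset.induction_on with
    | empty => simpa using h0
    | insert _ _ h ih => rw [Finset.sum_insert h, Finset.prod_insert h, hgtp, ih]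
  intro DecProd
  have main : ∀ lam : Fin 2 → ZMod p,
      DecProd lam = gtp (ω * (z 0 * lam 0 + z 1 * lam 1) * σ) := by
    intro lam
    show gtp (-(e2 * q₀)) *
        e (gp q₀)
          (gp (e2 + ∑ i, ∑ b,
            (-(γv i b) * (-(βv b * r i b) + lam b * θv i b * s i) +
             -(δv i b) * (αv b * r i b - lam b * ωv i b * s i)))) *
        e (gp (ω * l₀)) (gp (-(∑ i, ∑ b, r i b))) *
        ∏ i, ∏ b,
          (e (gp (l₀ * ωv i b + q₀ * γv i b + z b * αv b * x i))
             (gp (-(βv b * r i b) + lam b * θv i b * s i)) *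
           e (gp (l₀ * θv i b + q₀ * δv i b + z b * βv b * x i))
             (gp (αv b * r i b - lam b * ωv i b * s i)))
      = gtp (ω * (z 0 * lam 0 + z 1 * lam 1) * σ)
    simp only [he, ← hgtp, ← hsum]
    congr 1
    rw [← hσ, Finset.mul_sum, mul_add, mul_neg, Finset.mul_sum, Finset.mul_sum]
    have hs : ∑ i : Fin (u+1),
        (q₀ * ∑ b, (-(γv i b) * (-(βv b * r i b) + lam b * θv i b * s i) +
               -(δv i b) * (αv b * r i b - lam b * ωv i b * s i)) +
         (-(ω * l₀ * ∑ b, r i b) +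
          ∑ b, ((l₀ * ωv i b + q₀ * γv i b + z b * αv b * x i) * (-(βv b * r i b) + lam b * θv i b * s i) +
            (l₀ * θv i b + q₀ * δv i b + z b * βv b * x i) * (αv b * r i b - lam b * ωv i b * s i))))
        = ∑ i : Fin (u+1), ω * (z 0 * lam 0 + z 1 * lam 1) * (x i * s i) := by
      refine Finset.sum_congr rfl (fun i _ => ?_)
      simp only [Fin.sum_univ_two]
      linear_combination (l₀ * r i 0 + z 0 * lam 0 * x i * s i) * hconstr i 0 +
        (l₀ * r i 1 + z 1 * lam 1 * x i * s i) * hconstr i 1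
    rw [Finset.sum_add_distrib, Finset.sum_add_distrib] at hs
    rw [show ∀ f : Fin (u+1) → ZMod p, ∑ i, -(f i) = -∑ i, f i from fun f => by simp] at hs
    linear_combination hs
  refine ⟨main, fun hω hz0 hz1 hinj => ?_⟩
  have hcond : ∀ lam : Fin 2 → ZMod p,
      (DecProd lam = 1 ↔ lam 1 = (-(z 0) / (z 1)) * lam 0) := by
    intro lam
    rw [main lam, ← h0, hinj.eq_iff]
    constructor
    · intro h
      have h2 : z 0 * lam 0 + z 1 * lam 1 = 0 := by
        rcases mul_eq_zero.mp h with h' | h'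
        · rcases mul_eq_zero.mp h' with h'' | h''
          · exact absurd h'' hω
          · exact h''
        · exact absurd h' hσ0
      field_simp
      linear_combination h2
    · intro h
      rw [h]
      field_simp
      ring
  have himg : (univ : Finset (Fin 2 → ZMod p)).filter (fun lam => DecProd lam = 1)
      = (univ : Finset (ZMod p)).image (fun a => ![a, (-(z 0) / (z 1)) * a]) := by
    ext lam
    simp only [mem_filter, mem_univ, true_and, mem_image, hcond lam]
    constructor
    · intro h
      exact ⟨lam 0, funext fun j => by fin_cases j <;> simp [h]⟩
    · rintro ⟨a, rfl⟩
      simp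
  rw [himg, Finset.card_image_of_injective _
      (fun a b hab => by simpa using congrFun hab 0)]
  simp only [card_univ, ZMod.card, Fintype.card_fun, Fintype.card_fin]
  ring
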